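/- For positive integers a, b with b ≤ a and prime power q, the Gaussian binomial coefficient [a choose b]_q is strictly less than q^{b(a-b)} / ∏_{i=1}^∞ (1 - q^{-i}). -/

import Mathlib

open Finset Real

lemma log_summable_aux {r : ℝ} (h0 : 0 ≤ r) (h1 : r < 1) (m : ℕ) :
    Summable (fun i : ℕ => Real.log (1 - r ^ (i + m + 1))) := by
  have hpos : ∀ i : ℕ, 0 < 1 - r ^ (i + m + 1) := fun i => by
    have : r ^ (i + m + 1) < 1 := pow_lt_one₀ h0 h1 (by omega)
    linarith
  rw [← summable_neg_iff]
  have hgeo : Summable (fun i : ℕ => (1 - r)⁻¹ * r * r ^ i) :=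
    (summable_geometric_of_lt_one h0 h1).mul_left _
  refine Summable.of_nonneg_of_le (fun i => ?_) (fun i => ?_) hgeo
  · simp only [neg_nonneg]
    apply Real.log_nonpos (by linarith [hpos i])
    have : 0 ≤ r ^ (i + m + 1) := pow_nonneg h0 _
    linarith
  · set x := r ^ (i + m + 1) with hxdef
    have hxpos : 0 < 1 - x := hpos i
    have hx0 : 0 ≤ x := pow_nonneg h0 _
    have hx1 : x ≤ r ^ (i + 1) := pow_le_pow_of_le_one h0 h1.le (by omega)
    have hx2 : r ^ (i + 1) ≤ r := pow_le_of_le_one h0 h1.le (by omega)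
    have h := Real.log_le_sub_one_of_pos (inv_pos.mpr hxpos)
    rw [Real.log_inv] at h
    have e : (1 - x)⁻¹ - 1 = x / (1 - x) := by field_simp; ring
    calc -Real.log (1 - x) ≤ (1 - x)⁻¹ - 1 := by linarith
      _ = x / (1 - x) := e
      _ ≤ r ^ (i + 1) / (1 - r) := by
          gcongr
          · linarith
      _ = (1 - r)⁻¹ * r * r ^ i := by rw [pow_succ]; ring

lemma mult_aux {r : ℝ} (h0 : 0 ≤ r) (h1 : r < 1) (m : ℕ) :
    Multipliable (fun i : ℕ => 1 - r ^ (i + m + 1)) ∧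
      0 < ∏' i : ℕ, (1 - r ^ (i + m + 1)) ∧
      (∏' i : ℕ, (1 - r ^ (i + m + 1))) ≤ 1 := by
  have hpos : ∀ i : ℕ, 0 < 1 - r ^ (i + m + 1) := fun i => by
    have : r ^ (i + m + 1) < 1 := pow_lt_one₀ h0 h1 (by omega)
    linarith
  have hL : ∀ _ : Unit, Summable fun i : ℕ => Real.log (1 - r ^ (i + m + 1)) :=
    fun _ => log_summable_aux h0 h1 m
  constructor
  · exact Real.multipliable_of_summable_log hpos (hL ())
  · have := Real.rexp_tsum_eq_tprod (f := fun i => 1 - r ^ (i + m + 1)) hpos (hL ())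
    rw [← this]
    refine ⟨Real.exp_pos _, Real.exp_le_one_iff.mpr (tsum_nonpos fun i => ?_)⟩
    apply Real.log_nonpos (le_of_lt (hpos i))
    have := pow_nonneg h0 (i + m + 1)
    linarith

open Finset Real

theorem gaussian_binomial_lt (q a b : ℕ)
    (hq : ∃ p n : ℕ, p.Prime ∧ 0 < n ∧ q = p ^ n)
    (ha : 0 < a) (hb : 0 < b) (hba : b ≤ a) :
    (∏ j ∈ Finset.range b, (((q : ℝ) ^ a - (q : ℝ) ^ j) / ((q : ℝ) ^ b - (q : ℝ) ^ j)))
      < (q : ℝ) ^ (b * (a - b)) / ∏' i : ℕ, (1 - ((q : ℝ))⁻¹ ^ (i + 1)) := by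
  obtain ⟨p, n, hp, hn, rfl⟩ := hq
  have hq2 : 2 ≤ p ^ n := (Nat.one_lt_pow hn.ne' hp.one_lt)
  set q : ℕ := p ^ n
  have hq1 : (1:ℝ) < (q:ℝ) := by exact_mod_cast hq2
  have hq0 : (0:ℝ) < (q:ℝ) := by linarith
  set r : ℝ := ((q:ℝ))⁻¹ with hrdef
  have h0 : 0 ≤ r := by positivity
  have h1 : r < 1 := by
    rw [hrdef]
    exact inv_lt_one_of_one_lt₀ hq1
  -- infinite product facts
  have M0 : Multipliable (fun i : ℕ => 1 - r ^ (i + 1)) := by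
    simpa using (mult_aux h0 h1 0).1
  have hPinf : 0 < ∏' i : ℕ, (1 - r ^ (i + 1)) := by
    simpa using (mult_aux h0 h1 0).2.1
  have Mb : Multipliable (fun i : ℕ => 1 - r ^ (i + b + 1)) := (mult_aux h0 h1 b).1
  have hT1 : (∏' i : ℕ, (1 - r ^ (i + b + 1))) ≤ 1 := (mult_aux h0 h1 b).2.2
  have hsplit : (∏ i ∈ range b, (1 - r ^ (i + 1))) * (∏' i : ℕ, (1 - r ^ (i + b + 1)))
      = ∏' i : ℕ, (1 - r ^ (i + 1)) :=
    Multipliable.prod_mul_tprod_nat_mul' (f := fun i : ℕ => 1 - r ^ (i + 1)) (k := b) Mb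
  have hPb : 0 < ∏ i ∈ range b, (1 - r ^ (i + 1)) := by
    apply Finset.prod_pos
    intro i _
    have : r ^ (i + 1) < 1 := pow_lt_one₀ h0 h1 (by omega)
    linarith
  have hle : (∏' i : ℕ, (1 - r ^ (i + 1))) ≤ ∏ i ∈ range b, (1 - r ^ (i + 1)) := by
    rw [← hsplit]
    exact mul_le_of_le_one_right hPb.le hT1
  -- reindexing
  have key : (∏ j ∈ range b, (1 - r ^ (b - j))) = ∏ i ∈ range b, (1 - r ^ (i + 1)) := by
    rw [← Finset.prod_range_reflect (fun i => 1 - r ^ (i + 1)) b]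
    exact Finset.prod_congr rfl fun j hj => by
      rw [Finset.mem_range] at hj
      congr 2
      omega
  -- per-term inequality
  have hterm : ∀ j ∈ range b,
      ((q:ℝ) ^ a - (q:ℝ) ^ j) / ((q:ℝ) ^ b - (q:ℝ) ^ j)
        < (q:ℝ) ^ (a - b) / (1 - r ^ (b - j)) := by
    intro j hj
    rw [Finset.mem_range] at hj
    have den_pos : (0:ℝ) < (q:ℝ) ^ b - (q:ℝ) ^ j := by
      have := pow_lt_pow_right₀ hq1 hj
      linarith
    have h1r : (0:ℝ) < 1 - r ^ (b - j) := by
      have : r ^ (b - j) < 1 := pow_lt_one₀ h0 h1 (by omega)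
      linarith
    have heq : (q:ℝ) ^ (a - b) / (1 - r ^ (b - j)) = (q:ℝ) ^ a / ((q:ℝ) ^ b - (q:ℝ) ^ j) := by
      rw [div_eq_div_iff (ne_of_gt h1r) (ne_of_gt den_pos)]
      have e1 : (q:ℝ) ^ b = (q:ℝ) ^ j * (q:ℝ) ^ (b - j) := by
        rw [← pow_add]; congr 1; omega
      have e2 : (q:ℝ) ^ a = (q:ℝ) ^ (a - b) * (q:ℝ) ^ j * (q:ℝ) ^ (b - j) := by
        rw [← pow_add, ← pow_add]; congr 1; omega
      have hne : ((q:ℝ) ^ (b - j)) ≠ 0 := by positivity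
      rw [hrdef, inv_pow, e1, e2]
      field_simp
    rw [heq]
    have hnum : (q:ℝ) ^ a - (q:ℝ) ^ j < (q:ℝ) ^ a := by
      have : (0:ℝ) < (q:ℝ) ^ j := by positivity
      linarith
    exact div_lt_div_of_pos_right hnum den_pos |>.trans_le le_rfl
  have hterm_pos : ∀ j ∈ range b,
      (0:ℝ) < ((q:ℝ) ^ a - (q:ℝ) ^ j) / ((q:ℝ) ^ b - (q:ℝ) ^ j) := by
    intro j hj
    rw [Finset.mem_range] at hj
    have d : (0:ℝ) < (q:ℝ) ^ b - (q:ℝ) ^ j := by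
      have := pow_lt_pow_right₀ hq1 hj; linarith
    have nn : (0:ℝ) < (q:ℝ) ^ a - (q:ℝ) ^ j := by
      have := pow_lt_pow_right₀ hq1 (lt_of_lt_of_le hj hba); linarith
    exact div_pos nn d
  calc (∏ j ∈ Finset.range b, (((q : ℝ) ^ a - (q : ℝ) ^ j) / ((q : ℝ) ^ b - (q : ℝ) ^ j)))
      < ∏ j ∈ range b, ((q:ℝ) ^ (a - b) / (1 - r ^ (b - j))) :=
        Finset.prod_lt_prod_of_nonempty hterm_pos hterm (nonempty_range_iff.mpr hb.ne')
    _ = (q:ℝ) ^ (b * (a - b)) / ∏ i ∈ range b, (1 - r ^ (i + 1)) := by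
        rw [Finset.prod_div_distrib, Finset.prod_const, key, Finset.card_range, ← pow_mul, mul_comm (a - b) b]
    _ ≤ (q:ℝ) ^ (b * (a - b)) / ∏' i : ℕ, (1 - r ^ (i + 1)) :=
        div_le_div_of_nonneg_left (by positivity) hPinf hle
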